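/- Let K, B ⊂ ℝ² be convex bodies in general relative position, meaning dim F(K,u) + dim F(B,u) ≤ 1 for every unit vector u, and assume 0 ∈ int B. Then for every x ∈ ℝ² \ K there exist a unique point p ∈ bd K and a unique vector b ∈ bd B such that x = p + d(K,B,x)·b, where d(K,B,x) = min{r ≥ 0 : x ∈ K + rB}. -/

import Mathlib

open scoped Pointwise

noncomputable section

def suppSet {n : ℕ} (L : Set (EuclideanSpace ℝ (Fin n))) (u : EuclideanSpace ℝ (Fin n)) :
    Set (EuclideanSpace ℝ (Fin n)) :=
  {x ∈ L | ∀ y ∈ L, inner ℝ u y ≤ (inner ℝ u x : ℝ)}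

/-- Affine dimension of a subset. -/
def adim {n : ℕ} (s : Set (EuclideanSpace ℝ (Fin n))) : ℕ :=
  Module.finrank ℝ (affineSpan ℝ s).direction

def bDist {n : ℕ} (K B : Set (EuclideanSpace ℝ (Fin n))) (x : EuclideanSpace ℝ (Fin n)) : ℝ :=
  sInf {r : ℝ | 0 ≤ r ∧ x ∈ K + r • B}

lemma adim_zero_unique {n : ℕ} {s : Set (EuclideanSpace ℝ (Fin n))} (h : adim s = 0)
    {p q : EuclideanSpace ℝ (Fin n)} (hp : p ∈ s) (hq : q ∈ s) : p = q := by
  have hd : (affineSpan ℝ s).direction = ⊥ := Submodule.finrank_eq_zero.mp h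
  have h2 := AffineSubspace.vsub_mem_direction (mem_affineSpan ℝ hp) (mem_affineSpan ℝ hq)
  rw [hd, Submodule.mem_bot] at h2
  simpa [sub_eq_zero] using h2

lemma suppSet_subset_frontier {n : ℕ} {L : Set (EuclideanSpace ℝ (Fin n))}
    {u p : EuclideanSpace ℝ (Fin n)} (hu : u ≠ 0) (hp : p ∈ suppSet L u) : p ∈ frontier L := by
  obtain ⟨hpL, hmax⟩ := hp
  refine ⟨subset_closure hpL, fun hint => ?_⟩
  have ht : Filter.Tendsto (fun t : ℝ => p + t • u) (nhdsWithin 0 (Set.Ioi 0)) (nhds p) := by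
    have hc : Continuous (fun t : ℝ => p + t • u) := by continuity
    have := hc.tendsto 0
    simp only [zero_smul, add_zero] at this
    exact this.mono_left nhdsWithin_le_nhds
  have hev := ht.eventually (isOpen_interior.mem_nhds hint)
  obtain ⟨t, htL, ht0⟩ := (hev.and self_mem_nhdsWithin).exists
  have hle := hmax _ (interior_subset htL)
  rw [inner_add_right, real_inner_smul_right, real_inner_self_eq_norm_sq] at hle
  have : (0:ℝ) < t * ‖u‖ ^ 2 :=
    mul_pos (Set.mem_Ioi.mp ht0) (pow_pos (norm_pos_iff.mpr hu) 2)
  linarith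

theorem bProjection_exists_unique (K B : Set (EuclideanSpace ℝ (Fin 2)))
    (hKc : IsCompact K) (hKconv : Convex ℝ K) (hKint : (interior K).Nonempty)
    (hBc : IsCompact B) (hBconv : Convex ℝ B) (hB0 : (0 : EuclideanSpace ℝ (Fin 2)) ∈ interior B)
    (hgrp : ∀ u : EuclideanSpace ℝ (Fin 2), ‖u‖ = 1 → adim (suppSet K u) + adim (suppSet B u) ≤ 1) :
    ∀ x ∉ K, ∃! pb : EuclideanSpace ℝ (Fin 2) × EuclideanSpace ℝ (Fin 2),
      pb.1 ∈ frontier K ∧ pb.2 ∈ frontier B ∧ x = pb.1 + bDist K B x • pb.2 := by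
  intro x hx
  classical
  set A : Set ℝ := {r : ℝ | 0 ≤ r ∧ x ∈ K + r • B} with hA
  obtain ⟨k₀, hk₀⟩ : K.Nonempty := hKint.mono interior_subset
  have h0B : (0 : EuclideanSpace ℝ (Fin 2)) ∈ B := interior_subset hB0
  obtain ⟨ε, hε, hball⟩ := Metric.isOpen_iff.mp isOpen_interior 0 hB0
  have hballB : Metric.ball (0 : EuclideanSpace ℝ (Fin 2)) ε ⊆ B := hball.trans interior_subset
  have hAne : A.Nonempty := by
    set r : ℝ := ‖x - k₀‖ / ε + 1 with hr
    have hrpos : 0 < r := by positivity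
    refine ⟨r, le_of_lt hrpos, ?_⟩
    refine Set.mem_add.mpr ⟨k₀, hk₀, r • (r⁻¹ • (x - k₀)), Set.smul_mem_smul_set ?_, ?_⟩
    · apply hballB
      rw [Metric.mem_ball, dist_zero_right, norm_smul, norm_inv, Real.norm_eq_abs,
        abs_of_pos hrpos]
      have hlt : ‖x - k₀‖ < r * ε := by
        rw [hr, add_mul, div_mul_cancel₀ _ hε.ne']
        linarith
      rw [inv_mul_lt_iff₀ hrpos]
      linarith [hlt]
    · rw [smul_inv_smul₀ hrpos.ne']
      abel
  have hAbdd : BddBelow A := ⟨0, fun r hr => hr.1⟩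
  set d := bDist K B x with hd
  have hdef : d = sInf A := rfl
  have hd0 : 0 ≤ d := by rw [hdef]; exact le_csInf hAne fun r hr => hr.1
  obtain ⟨rs, -, hrs_tend, hrs_mem⟩ := exists_seq_tendsto_sInf hAne hAbdd
  rw [← hdef] at hrs_tend
  have hmem : ∀ n, ∃ k ∈ K, ∃ b ∈ B, k + rs n • b = x := by
    intro n
    obtain ⟨y, hy, z, hz, hyz⟩ := Set.mem_add.mp (hrs_mem n).2
    obtain ⟨b, hbB, hbz⟩ := Set.mem_smul_set.mp hz
    exact ⟨y, hy, b, hbB, by rw [hbz]; exact hyz⟩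
  choose k hkK b hbB hkb using hmem
  obtain ⟨⟨p₀, b₀⟩, hpb, φ, hφ, hlim⟩ :=
    (hKc.prod hBc).tendsto_subseq (x := fun n => (k n, b n)) (fun n => ⟨hkK n, hbB n⟩)
  have hp0K : p₀ ∈ K := hpb.1
  have hb0B : b₀ ∈ B := hpb.2
  have hlimk : Filter.Tendsto (fun n => k (φ n)) Filter.atTop (nhds p₀) :=
    (continuous_fst.tendsto _).comp hlim
  have hlimb : Filter.Tendsto (fun n => b (φ n)) Filter.atTop (nhds b₀) :=
    (continuous_snd.tendsto _).comp hlim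
  have hxeq : x = p₀ + d • b₀ := by
    have h1 : Filter.Tendsto (fun n => k (φ n) + rs (φ n) • b (φ n)) Filter.atTop
        (nhds (p₀ + d • b₀)) :=
      hlimk.add ((hrs_tend.comp hφ.tendsto_atTop).smul hlimb)
    have h2 : (fun n => k (φ n) + rs (φ n) • b (φ n)) = fun _ => x :=
      funext fun n => hkb (φ n)
    rw [h2] at h1
    exact (tendsto_nhds_unique tendsto_const_nhds h1)
  have hdpos : 0 < d := by
    rcases hd0.lt_or_eq with h | h
    · exact h
    · exfalso; apply hx
      rw [hxeq, ← h, zero_smul, add_zero]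
      exact hp0K
  set S := K + d • B with hS
  have hxS : x ∈ S := by
    rw [hxeq]; exact Set.add_mem_add hp0K (Set.smul_mem_smul_set hb0B)
  have hSconv : Convex ℝ S := hKconv.add (hBconv.smul d)
  have hKS : K ⊆ S := by
    intro y hy
    have h0 : (0 : EuclideanSpace ℝ (Fin 2)) ∈ d • B :=
      Set.mem_smul_set.mpr ⟨0, h0B, smul_zero d⟩
    simpa using Set.add_mem_add hy h0
  have hSint : (interior S).Nonempty := hKint.mono (interior_mono hKS)
  have hout : ∀ s : ℝ, 1 < s → k₀ + s • (x - k₀) ∉ S := by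
    intro s hs hmemS
    obtain ⟨k', hk', z, hz, hkz⟩ := Set.mem_add.mp hmemS
    obtain ⟨b', hb', rfl⟩ := Set.mem_smul_set.mp hz
    have hs0 : 0 < s := lt_trans one_pos hs
    have hsinv : 0 < s⁻¹ := by positivity
    have hsinv1 : s⁻¹ < 1 := by
      rw [inv_lt_one_iff₀]; right; exact hs
    have hxcombo : x = (s⁻¹ • k' + (1 - s⁻¹) • k₀) + (d * s⁻¹) • b' := by
      have h3 : s • x = (k' + d • b') + (s - 1) • k₀ := by
        rw [hkz]
        module
      have h4 : s • ((s⁻¹ • k' + (1 - s⁻¹) • k₀) + (d * s⁻¹) • b') = s • x := by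
        rw [h3]
        match_scalars <;> field_simp
      exact (smul_right_injective _ hs0.ne' h4).symm
    have hmem' : d * s⁻¹ ∈ A := by
      refine ⟨by positivity, ?_⟩
      refine Set.mem_add.mpr ⟨s⁻¹ • k' + (1 - s⁻¹) • k₀,
        hKconv hk' hk₀ hsinv.le (by linarith) (by ring), (d * s⁻¹) • b',
        Set.smul_mem_smul_set hb', hxcombo.symm⟩
    have hle : d ≤ d * s⁻¹ := by rw [hdef]; exact csInf_le hAbdd hmem'
    nlinarith
  have hxint : x ∉ interior S := by
    intro hxi
    have hcont : Filter.Tendsto (fun s : ℝ => k₀ + s • (x - k₀)) (nhdsWithin 1 (Set.Ioi 1))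
        (nhds x) := by
      have hc : Continuous (fun s : ℝ => k₀ + s • (x - k₀)) :=
        continuous_const.add (continuous_id.smul continuous_const)
      have := hc.tendsto 1
      simp only [one_smul, add_sub_cancel] at this
      exact this.mono_left nhdsWithin_le_nhds
    have hev := hcont.eventually (isOpen_interior.mem_nhds hxi)
    obtain ⟨s, hsmem, hs1⟩ := (hev.and self_mem_nhdsWithin).exists
    exact hout s hs1 (interior_subset hsmem)
  obtain ⟨f, hf⟩ := geometric_hahn_banach_open_point hSconv.interior isOpen_interior hxint
  have hfS : ∀ y ∈ S, f y ≤ f x := by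
    have hclo : S ⊆ closure (interior S) := by
      obtain ⟨a, ha⟩ := hSint
      intro y hy
      have hseq : Filter.Tendsto (fun t : ℝ => t • a + (1 - t) • y)
          (nhdsWithin 0 (Set.Ioi 0)) (nhds y) := by
        have hc : Continuous (fun t : ℝ => t • a + (1 - t) • y) :=
          (continuous_id.smul continuous_const).add
            ((continuous_const.sub continuous_id).smul continuous_const)
        have := hc.tendsto 0
        simp only [zero_smul, zero_add, sub_zero, one_smul] at this
        exact this.mono_left nhdsWithin_le_nhds
      have h01 : ∀ᶠ t : ℝ in nhdsWithin 0 (Set.Ioi 0), t < 1 :=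
        ((eventually_lt_nhds one_pos).filter_mono nhdsWithin_le_nhds)
      have hev2 : ∀ᶠ t : ℝ in nhdsWithin 0 (Set.Ioi 0),
          t • a + (1 - t) • y ∈ interior S := by
        filter_upwards [self_mem_nhdsWithin, h01] with t ht ht1
        exact hSconv.combo_interior_closure_mem_interior ha (subset_closure hy)
          (Set.mem_Ioi.mp ht) (by linarith) (by ring)
      exact mem_closure_of_tendsto hseq hev2
    intro y hy
    exact closure_minimal (fun a ha => (hf a ha).le)
      (isClosed_le f.continuous continuous_const) (hclo hy)
  set v := (InnerProductSpace.toDual ℝ (EuclideanSpace ℝ (Fin 2))).symm f with hv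
  have hvy : ∀ y, (inner ℝ v y : ℝ) = f y := fun y => InnerProductSpace.toDual_symm_apply
  have hvne : v ≠ 0 := by
    obtain ⟨a, ha⟩ := hSint
    intro h0
    have h1 := hf a ha
    rw [← hvy a, ← hvy x, h0] at h1
    simp at h1
  set u := ‖v‖⁻¹ • v with hu
  have hu1 : ‖u‖ = 1 := norm_smul_inv_norm hvne
  have hune : u ≠ 0 := fun h => by simp [h] at hu1
  have huy : ∀ y, (inner ℝ u y : ℝ) = ‖v‖⁻¹ * f y := fun y => by
    rw [hu, real_inner_smul_left, hvy]
  have huS : ∀ y ∈ S, (inner ℝ u y : ℝ) ≤ (inner ℝ u x : ℝ) := fun y hy => by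
    rw [huy, huy]
    exact mul_le_mul_of_nonneg_left (hfS y hy) (inv_nonneg.mpr (norm_nonneg v))
  have key : ∀ p ∈ K, ∀ c ∈ B, x = p + d • c → p ∈ suppSet K u ∧ c ∈ suppSet B u := by
    intro p hp c hc hxpc
    have hxval : (inner ℝ u x : ℝ) = inner ℝ u p + d * inner ℝ u c := by
      rw [hxpc, inner_add_right, real_inner_smul_right]
    constructor
    · refine ⟨hp, fun y hy => ?_⟩
      have hyS : y + d • c ∈ S := Set.add_mem_add hy (Set.smul_mem_smul_set hc)
      have h1 := huS _ hyS
      rw [inner_add_right, real_inner_smul_right, hxval] at h1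
      linarith
    · refine ⟨hc, fun y hy => ?_⟩
      have hyS : p + d • y ∈ S := Set.add_mem_add hp (Set.smul_mem_smul_set hy)
      have h1 := huS _ hyS
      rw [inner_add_right, real_inner_smul_right, hxval] at h1
      have h2 : d * inner ℝ u y ≤ d * inner ℝ u c := by linarith
      exact le_of_mul_le_mul_left h2 hdpos
  obtain ⟨hpsupp, hbsupp⟩ := key p₀ hp0K b₀ hb0B hxeq
  refine ⟨(p₀, b₀), ⟨suppSet_subset_frontier hune hpsupp,
    suppSet_subset_frontier hune hbsupp, hxeq⟩, ?_⟩
  rintro ⟨q, c⟩ ⟨hqf, hcf, hxqc⟩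
  have hqK : q ∈ K := hKc.isClosed.frontier_subset hqf
  have hcB : c ∈ B := hBc.isClosed.frontier_subset hcf
  obtain ⟨hqsupp, hcsupp⟩ := key q hqK c hcB hxqc
  have hadim := hgrp u hu1
  rcases (by omega : adim (suppSet K u) = 0 ∨ adim (suppSet B u) = 0) with h | h
  · have hq : q = p₀ := adim_zero_unique h hqsupp hpsupp
    have hdc : d • c = d • b₀ := by
      have h1 : q + d • c = p₀ + d • b₀ := by rw [← hxqc, ← hxeq]
      rw [hq] at h1
      exact add_left_cancel h1
    have hc2 : c = b₀ := smul_right_injective _ hdpos.ne' hdc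
    simp [hq, hc2]
  · have hc2 : c = b₀ := adim_zero_unique h hcsupp hbsupp
    have hq : q = p₀ := by
      have h1 : q + d • c = p₀ + d • b₀ := by rw [← hxqc, ← hxeq]
      rw [hc2] at h1
      exact add_right_cancel h1
    simp [hq, hc2]
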